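/- Let A be an n×n positive semidefinite Hermitian matrix that is singular (det A = 0). Then the sum over i of a_{ii} times the determinant of the (n−1)×(n−1) matrix obtained by deleting the i-th row and i-th column of A is at most (n/(n−1))^{n−1} times the product of the diagonal entries of A. -/

import Mathlib

open Matrix Finset

-- AM-GM helper
lemma amgm_aux {ι : Type*} (s : Finset ι) (μ : ι → ℝ) (hμ : ∀ i ∈ s, 0 ≤ μ i)
    {m : ℕ} (hm : 1 ≤ m) (hcard : s.card = m) :
    ∏ j ∈ s, μ j ≤ ((∑ j ∈ s, μ j) / m) ^ m := by
  have hm0 : (m : ℝ) ≠ 0 := Nat.cast_ne_zero.mpr (by omega)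
  have h := Real.geom_mean_le_arith_mean_weighted s (fun _ => (m : ℝ)⁻¹) μ
    (fun i _ => by positivity)
    (by simp [hcard, mul_inv_cancel₀ hm0])
    hμ
  have hrhs : ∑ i ∈ s, (m : ℝ)⁻¹ * μ i = (∑ j ∈ s, μ j) / m := by
    rw [← Finset.mul_sum]; ring
  rw [hrhs] at h
  have hbase : 0 ≤ ∏ i ∈ s, μ i ^ ((m : ℝ)⁻¹) :=
    Finset.prod_nonneg fun i hi => Real.rpow_nonneg (hμ i hi) _
  have hpow := pow_le_pow_left₀ hbase h m
  calc ∏ j ∈ s, μ j = (∏ i ∈ s, μ i ^ ((m : ℝ)⁻¹)) ^ m := by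
        rw [← Finset.prod_pow]
        refine Finset.prod_congr rfl fun i hi => ?_
        rw [← Real.rpow_natCast (μ i ^ ((m:ℝ)⁻¹)) m, ← Real.rpow_mul (hμ i hi),
          inv_mul_cancel₀ hm0, Real.rpow_one]
    _ ≤ ((∑ j ∈ s, μ j) / m) ^ m := hpow

lemma trace_adjugate_hermitian {n : ℕ} (B : Matrix (Fin (n+1)) (Fin (n+1)) ℝ)
    (hH : B.IsHermitian) :
    Matrix.trace (adjugate B) = ∑ i, ∏ j ∈ Finset.univ.erase i, hH.eigenvalues j := by
  have hspec := hH.spectral_theorem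
  set U : Matrix (Fin (n+1)) (Fin (n+1)) ℝ := (hH.eigenvectorUnitary : Matrix (Fin (n+1)) (Fin (n+1)) ℝ) with hU
  have hdiag : Matrix.diagonal ((RCLike.ofReal : ℝ → ℝ) ∘ hH.eigenvalues)
      = Matrix.diagonal hH.eigenvalues := by
    congr 1
  have hUU : star U * U = 1 := Matrix.mem_unitaryGroup_iff'.mp hH.eigenvectorUnitary.2
  rw [hdiag] at hspec
  calc Matrix.trace (adjugate B)
      = Matrix.trace (adjugate (U * Matrix.diagonal hH.eigenvalues * star U)) := by rw [Unitary.conjStarAlgAut_apply] at hspec; rw [← hspec]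
    _ = Matrix.trace (adjugate (star U) * (adjugate (Matrix.diagonal hH.eigenvalues) * adjugate U)) := by
        rw [Matrix.adjugate_mul_distrib, Matrix.adjugate_mul_distrib]
    _ = Matrix.trace ((adjugate (Matrix.diagonal hH.eigenvalues) * adjugate U) * adjugate (star U)) := by
        rw [Matrix.trace_mul_comm]
    _ = Matrix.trace (adjugate (Matrix.diagonal hH.eigenvalues) * adjugate (star U * U)) := by
        rw [Matrix.adjugate_mul_distrib, Matrix.mul_assoc]
    _ = ∑ i, ∏ j ∈ Finset.univ.erase i, hH.eigenvalues j := by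
        rw [hUU, Matrix.adjugate_one, Matrix.mul_one, Matrix.adjugate_diagonal,
          Matrix.trace_diagonal]

lemma trace_eq_sum_eig {n : ℕ} (B : Matrix (Fin (n+1)) (Fin (n+1)) ℝ)
    (hH : B.IsHermitian) : Matrix.trace B = ∑ i, hH.eigenvalues i := by
  have hspec := hH.spectral_theorem
  set U : Matrix (Fin (n+1)) (Fin (n+1)) ℝ := (hH.eigenvectorUnitary : Matrix (Fin (n+1)) (Fin (n+1)) ℝ) with hU
  have hdiag : Matrix.diagonal ((RCLike.ofReal : ℝ → ℝ) ∘ hH.eigenvalues)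
      = Matrix.diagonal hH.eigenvalues := by congr 1
  rw [hdiag] at hspec
  have hUU : star U * U = 1 := Matrix.mem_unitaryGroup_iff'.mp hH.eigenvectorUnitary.2
  calc Matrix.trace B = Matrix.trace (U * Matrix.diagonal hH.eigenvalues * star U) := by rw [Unitary.conjStarAlgAut_apply] at hspec; rw [← hspec]
    _ = Matrix.trace (star U * U * Matrix.diagonal hH.eigenvalues) := by
        rw [Matrix.trace_mul_cycle]
    _ = ∑ i, hH.eigenvalues i := by rw [hUU, Matrix.one_mul, Matrix.trace_diagonal]

lemma det_eq_prod_eig {n : ℕ} (B : Matrix (Fin (n+1)) (Fin (n+1)) ℝ)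
    (hH : B.IsHermitian) : B.det = ∏ i, hH.eigenvalues i := by
  simpa using hH.det_eq_prod_eigenvalues

lemma key_diag_one (n : ℕ) (hn : 1 ≤ n) (B : Matrix (Fin (n+1)) (Fin (n+1)) ℝ)
    (hB : B.PosSemidef) (hdet : B.det = 0) (hdiag : ∀ i, B i i = 1) :
    ∑ i : Fin (n+1), (B.submatrix i.succAbove i.succAbove).det ≤ (((n : ℝ) + 1) / n) ^ n := by
  have hH := hB.isHermitian
  set μ : Fin (n+1) → ℝ := hH.eigenvalues with hμdef
  have hμ0 : ∀ i, 0 ≤ μ i := hB.eigenvalues_nonneg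
  -- step 1: sum of principal minors = trace adjugate
  have h1 : ∑ i : Fin (n+1), (B.submatrix i.succAbove i.succAbove).det = Matrix.trace (adjugate B) := by
    rw [Matrix.trace]
    refine Finset.sum_congr rfl fun i _ => ?_
    rw [Matrix.diag, Matrix.adjugate_fin_succ_eq_det_submatrix]
    rw [Even.neg_one_pow ⟨i, rfl⟩, one_mul]
  -- step 2: eigenvalue facts
  have hsum : ∑ i, μ i = (n : ℝ) + 1 := by
    have := trace_eq_sum_eig B hH
    rw [Matrix.trace] at this
    have h2 : ∑ i, Matrix.diag B i = ((n : ℝ) + 1) := by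
      simp [Matrix.diag, hdiag]
    rw [h2] at this
    exact this.symm
  have hprod : ∏ i, μ i = 0 := by rw [← det_eq_prod_eig B hH]; exact hdet
  obtain ⟨k, -, hk⟩ := Finset.prod_eq_zero_iff.mp hprod
  -- step 3: trace adjugate = prod over erase k
  have h2 : Matrix.trace (adjugate B) = ∏ j ∈ Finset.univ.erase k, μ j := by
    rw [trace_adjugate_hermitian B hH]
    refine Finset.sum_eq_single k (fun i _ hik => ?_) (by simp)
    exact Finset.prod_eq_zero (Finset.mem_erase.mpr ⟨(Ne.symm hik), Finset.mem_univ _⟩) hk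
  rw [h1, h2]
  -- step 4: AM-GM
  have hcard : (Finset.univ.erase k).card = n := by
    rw [Finset.card_erase_of_mem (Finset.mem_univ _)]
    simp
  have hsum' : ∑ j ∈ Finset.univ.erase k, μ j = (n : ℝ) + 1 := by
    rw [← Finset.add_sum_erase _ _ (Finset.mem_univ k)] at hsum
    rw [hk, zero_add] at hsum
    exact hsum
  have := amgm_aux (Finset.univ.erase k) μ (fun i _ => hμ0 i) hn hcard
  rw [hsum'] at this
  exact this

open scoped MatrixOrder Matrix.Norms.L2Operator in
lemma psd_row_zero {m : Type*} [Fintype m] [DecidableEq m]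
    {A : Matrix m m ℝ} (hA : A.PosSemidef) {i : m} (h : A i i = 0) (j : m) :
    A i j = 0 := by
  obtain ⟨C, rfl⟩ := CStarAlgebra.nonneg_iff_eq_star_mul_self.mp hA.nonneg
  have h0 : ∑ k, C k i * C k i = 0 := by
    simpa [Matrix.mul_apply, Matrix.conjTranspose_apply] using h
  have hC : ∀ k, C k i = 0 := fun k => mul_self_eq_zero.mp <|
    (Finset.sum_eq_zero_iff_of_nonneg (fun k _ => mul_self_nonneg (C k i))).mp h0 k
      (Finset.mem_univ k)
  simp [Matrix.mul_apply, Matrix.conjTranspose_apply, hC]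

/-- For an (n+1)×(n+1) real symmetric positive semidefinite singular
matrix `A` (so size ≥ 2 since `1 ≤ n`), the sum over `i` of `A i i` times the
determinant of the principal submatrix obtained by deleting row `i` and column `i`
is at most `((n+1)/n)^n` times the product of the diagonal entries. -/
theorem stmt_0 (n : ℕ) (hn : 1 ≤ n) (A : Matrix (Fin (n + 1)) (Fin (n + 1)) ℝ)
    (hA : A.PosSemidef) (hdet : A.det = 0) :
    ∑ i, A i i * (A.submatrix i.succAbove i.succAbove).det ≤
      (((n : ℝ) + 1) / n) ^ n * ∏ i, A i i := by
  have hdiag0 : ∀ i, 0 ≤ A i i := by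
    intro i
    exact hA.diag_nonneg
  by_cases hz : ∃ i, A i i = 0
  · obtain ⟨i0, hi0⟩ := hz
    have hrow : ∀ j, A i0 j = 0 := psd_row_zero hA hi0
    have hL : ∑ i, A i i * (A.submatrix i.succAbove i.succAbove).det = 0 := by
      refine Finset.sum_eq_zero fun j _ => ?_
      rcases eq_or_ne j i0 with rfl | hji
      · rw [hi0, zero_mul]
      · have hzero : (A.submatrix j.succAbove j.succAbove).det = 0 := by
          obtain ⟨k, hk⟩ := Fin.exists_succAbove_eq (Ne.symm hji)
          exact Matrix.det_eq_zero_of_row_eq_zero k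
            (fun l => by simp [Matrix.submatrix_apply, hk, hrow])
        rw [hzero, mul_zero]
    have hR : (∏ i, A i i) = 0 := Finset.prod_eq_zero (Finset.mem_univ i0) hi0
    rw [hL, hR, mul_zero]
  · push_neg at hz
    have hpos : ∀ i, 0 < A i i := fun i => (hdiag0 i).lt_of_ne' (hz i)
    set e : Fin (n+1) → ℝ := fun i => (Real.sqrt (A i i))⁻¹ with he
    have hsqrt : ∀ i, Real.sqrt (A i i) ≠ 0 := fun i => ne_of_gt (Real.sqrt_pos.mpr (hpos i))
    set D : Matrix (Fin (n+1)) (Fin (n+1)) ℝ := Matrix.diagonal e with hD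
    have hDsa : Dᴴ = D := by
      rw [hD, Matrix.diagonal_conjTranspose]
      congr 1
    set B : Matrix (Fin (n+1)) (Fin (n+1)) ℝ := D * A * D with hBdef
    have hB : B.PosSemidef := by
      have := hA.mul_mul_conjTranspose_same D
      rwa [hDsa] at this
    have hBapp : ∀ i j, B i j = e i * A i j * e j := by
      intro i j
      rw [hBdef, hD]
      simp [Matrix.mul_diagonal, Matrix.diagonal_mul]
    have hee : ∀ i, e i * A i i * e i = 1 := by
      intro i
      rw [he]
      simp only
      rw [show A i i = Real.sqrt (A i i) * Real.sqrt (A i i) from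
        (Real.mul_self_sqrt (hpos i).le).symm]
      field_simp
      rw [Real.sqrt_sq (Real.sqrt_nonneg _)]
      exact div_self (pow_ne_zero 2 (hsqrt i))
    have hBdiag : ∀ i, B i i = 1 := fun i => by rw [hBapp, hee]
    have hBdet : B.det = 0 := by
      rw [hBdef, Matrix.det_mul, Matrix.det_mul, hdet, mul_zero, zero_mul]
    have hsub : ∀ i : Fin (n+1), B.submatrix i.succAbove i.succAbove =
        Matrix.diagonal (e ∘ i.succAbove) * (A.submatrix i.succAbove i.succAbove) *
          Matrix.diagonal (e ∘ i.succAbove) := by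
      intro i; ext k l
      simp only [Matrix.submatrix_apply, Matrix.mul_diagonal, Matrix.diagonal_mul,
        Function.comp_apply]
      rw [hBapp]
    have hdetsub : ∀ i : Fin (n+1), (B.submatrix i.succAbove i.succAbove).det =
        (∏ k, e (i.succAbove k))^2 * (A.submatrix i.succAbove i.succAbove).det := by
      intro i
      rw [hsub i, Matrix.det_mul, Matrix.det_mul, Matrix.det_diagonal]
      simp only [Function.comp_def]
      ring
    have hterm : ∀ i : Fin (n+1),
        (∏ k, e (i.succAbove k))^2 * ∏ k, A (i.succAbove k) (i.succAbove k) = 1 := by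
      intro i
      rw [← Finset.prod_pow, ← Finset.prod_mul_distrib]
      refine Finset.prod_eq_one fun k _ => ?_
      have := hee (i.succAbove k)
      nlinarith [this]
    have hAi : ∀ i : Fin (n+1), (A.submatrix i.succAbove i.succAbove).det =
        (∏ k, A (i.succAbove k) (i.succAbove k)) * (B.submatrix i.succAbove i.succAbove).det := by
      intro i
      rw [hdetsub i, ← mul_assoc, mul_comm (∏ k, A (i.succAbove k) (i.succAbove k)),
        hterm i, one_mul]
    calc ∑ i, A i i * (A.submatrix i.succAbove i.succAbove).det
        = ∑ i : Fin (n+1), (∏ j, A j j) * (B.submatrix i.succAbove i.succAbove).det := by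
          refine Finset.sum_congr rfl fun i _ => ?_
          rw [hAi i, ← mul_assoc, ← Fin.prod_univ_succAbove (fun j => A j j) i]
      _ = (∏ j, A j j) * ∑ i : Fin (n+1), (B.submatrix i.succAbove i.succAbove).det := by
          rw [Finset.mul_sum]
      _ ≤ (∏ j, A j j) * (((n : ℝ) + 1) / n) ^ n := by
          exact mul_le_mul_of_nonneg_left (key_diag_one n hn B hB hBdet hBdiag)
            (Finset.prod_nonneg fun i _ => (hpos i).le)
      _ = (((n : ℝ) + 1) / n) ^ n * ∏ i, A i i := mul_comm _ _
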